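/- Let H be a real Hilbert space, K a closed subspace of H, P : H → H the orthogonal projection onto K, I : H → ℝ a continuous linear functional, (Ω, 𝔉, ℙ) a probability space, θ ∈ (1/2, 1], and let Q assign to each f ∈ H a measurable, square-integrable function Q f : Ω → ℝ. Assume that for every f ∈ H with ‖f‖ ≤ 1 one has ℙ({ω ∈ Ω : (Q f)(ω) = (Q (P f))(ω)}) ≥ θ. Then for every f ∈ H with ‖f‖ ≤ 1 there exists g ∈ H with ‖g‖ ≤ 1 such that E[(I g − Q g)²] ≥ (2θ − 1) · (I f − I (P f))². -/

import Mathlib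

open MeasureTheory RealInnerProductSpace

/-- Lemma 3 (abstract form): if a randomized algorithm `Q` satisfies
`ℙ(Q f = Q (P f)) ≥ θ` for all `f` in the unit ball, where `P` is the orthogonal
projection onto a (complete, i.e. closed) subspace `K`, then for every `f` in the
unit ball there is `g` in the unit ball with
`E[(I g − Q g)²] ≥ (2θ − 1)·(I f − I (P f))²`. -/
theorem stmt1 {H : Type*} [NormedAddCommGroup H] [InnerProductSpace ℝ H]
    (K : Submodule ℝ H) [CompleteSpace K]
    (I : H →L[ℝ] ℝ)
    {Ω : Type*} [MeasurableSpace Ω] (μ : Measure Ω) [IsProbabilityMeasure μ]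
    (θ : ℝ) (hθ : θ ∈ Set.Ioc (1 / 2 : ℝ) 1)
    (Q : H → Ω → ℝ)
    (hQmeas : ∀ f : H, Measurable (Q f))
    (hQL2 : ∀ f : H, MemLp (Q f) 2 μ)
    (hcoin : ∀ f : H, ‖f‖ ≤ 1 →
      ENNReal.ofReal θ ≤ μ {ω : Ω | Q f ω = Q ((K.orthogonalProjectionOnto f : K) : H) ω}) :
    ∀ f : H, ‖f‖ ≤ 1 → ∃ g : H, ‖g‖ ≤ 1 ∧
      (2 * θ - 1) * (I f - I ((K.orthogonalProjectionOnto f : K) : H)) ^ 2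
        ≤ ∫ ω, (I g - Q g ω) ^ 2 ∂μ := by
  intro f hf
  set h : H := f - ((K.orthogonalProjectionOnto f : K) : H) with hh
  -- norm of h
  have hmem : h ∈ Kᗮ := K.sub_starProjection_mem_orthogonal f
  have hnorm : ‖h‖ ≤ 1 := by
    have horth : ⟪((K.orthogonalProjectionOnto f : K) : H), h⟫ = 0 :=
      (Submodule.mem_orthogonal K h).mp hmem _ (K.orthogonalProjectionOnto f).2
    have heq : ‖((K.orthogonalProjectionOnto f : K) : H) + h‖ ^ 2
        = ‖((K.orthogonalProjectionOnto f : K) : H)‖ ^ 2 + ‖h‖ ^ 2 := by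
      rw [norm_add_sq_real, horth]; ring
    have hfsplit : ((K.orthogonalProjectionOnto f : K) : H) + h = f := by simp [hh]
    rw [hfsplit] at heq
    nlinarith [norm_nonneg ((K.orthogonalProjectionOnto f : K) : H), norm_nonneg f, norm_nonneg h]
  have hnormneg : ‖-h‖ ≤ 1 := by simpa using hnorm
  -- projections of h and -h are zero
  have hPh : ((K.orthogonalProjectionOnto h : K) : H) = 0 := by
    rw [Submodule.orthogonalProjectionOnto_apply_of_mem_orthogonal hmem]; rfl
  have hPnh : ((K.orthogonalProjectionOnto (-h) : K) : H) = 0 := by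
    rw [map_neg, Submodule.orthogonalProjectionOnto_apply_of_mem_orthogonal hmem]
    simp
  set A : Set Ω := {ω | Q h ω = Q 0 ω} with hA
  set B : Set Ω := {ω | Q (-h) ω = Q 0 ω} with hB
  have hAm : MeasurableSet A := measurableSet_eq_fun (hQmeas h) (hQmeas 0)
  have hBm : MeasurableSet B := measurableSet_eq_fun (hQmeas (-h)) (hQmeas 0)
  have hθ0 : (0:ℝ) ≤ θ := by linarith [hθ.1]
  have hAθ : θ ≤ (μ A).toReal := by
    have := hcoin h hnorm
    rw [hPh] at this
    calc θ = (ENNReal.ofReal θ).toReal := (ENNReal.toReal_ofReal hθ0).symm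
    _ ≤ (μ A).toReal := ENNReal.toReal_mono (measure_ne_top μ A) this
  have hBθ : θ ≤ (μ B).toReal := by
    have := hcoin (-h) hnormneg
    rw [hPnh] at this
    calc θ = (ENNReal.ofReal θ).toReal := (ENNReal.toReal_ofReal hθ0).symm
    _ ≤ (μ B).toReal := ENNReal.toReal_mono (measure_ne_top μ B) this
  -- measure of intersection
  have hunion : (μ (A ∪ B)).toReal ≤ 1 := by
    have := prob_le_one (μ := μ) (s := A ∪ B)
    exact ENNReal.toReal_mono ENNReal.one_ne_top this |>.trans_eq ENNReal.toReal_one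
  have hsum : (μ (A ∪ B)).toReal + (μ (A ∩ B)).toReal = (μ A).toReal + (μ B).toReal := by
    rw [← ENNReal.toReal_add (measure_ne_top _ _) (measure_ne_top _ _),
      ← ENNReal.toReal_add (measure_ne_top _ _) (measure_ne_top _ _),
      measure_union_add_inter A hBm]
  have hABμ : 2 * θ - 1 ≤ (μ (A ∩ B)).toReal := by linarith
  -- integrals
  set a : ℝ := I f - I ((K.orthogonalProjectionOnto f : K) : H) with ha
  have haIh : I h = a := by simp [hh, ha]
  have hint : ∀ g : H, Integrable (fun ω => (I g - Q g ω) ^ 2) μ := by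
    intro g
    have : MemLp (fun ω => I g - Q g ω) 2 μ := (memLp_const (I g)).sub (hQL2 g)
    exact this.integrable_sq
  have hptwise : ∀ ω ∈ A ∩ B, 2 * a ^ 2 ≤ (I h - Q h ω) ^ 2 + (I (-h) - Q (-h) ω) ^ 2 := by
    intro ω hω
    rw [hω.1, hω.2, map_neg, haIh]
    nlinarith [sq_nonneg (Q 0 ω)]
  have hkey : 2 * a ^ 2 * (2 * θ - 1) ≤
      (∫ ω, (I h - Q h ω) ^ 2 ∂μ) + ∫ ω, (I (-h) - Q (-h) ω) ^ 2 ∂μ := by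
    have hS : (2 * a ^ 2) * (μ (A ∩ B)).toReal ≤
        ∫ ω in A ∩ B, ((I h - Q h ω) ^ 2 + (I (-h) - Q (-h) ω) ^ 2) ∂μ :=
      setIntegral_ge_of_const_le_real (hAm.inter hBm) (measure_ne_top _ _) hptwise
        (((hint h).add (hint (-h))).integrableOn)
    have hmono : ∫ ω in A ∩ B, ((I h - Q h ω) ^ 2 + (I (-h) - Q (-h) ω) ^ 2) ∂μ ≤
        ∫ ω, ((I h - Q h ω) ^ 2 + (I (-h) - Q (-h) ω) ^ 2) ∂μ := by
      apply setIntegral_le_integral ((hint h).add (hint (-h)))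
      filter_upwards with ω using add_nonneg (sq_nonneg _) (sq_nonneg _)
    rw [integral_add (hint h) (hint (-h))] at hmono
    have h2a : 0 ≤ 2 * a ^ 2 := by positivity
    nlinarith [mul_le_mul_of_nonneg_left hABμ h2a]
  by_cases hc : (2 * θ - 1) * a ^ 2 ≤ ∫ ω, (I h - Q h ω) ^ 2 ∂μ
  · exact ⟨h, hnorm, hc⟩
  · exact ⟨-h, hnormneg, by linarith⟩
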